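/- (Theorem 1.) For all i ≤ m and j ≤ n, the map sending an antidominant backtrace (i_1,j_1), ..., (i_k,j_k) for (i,j) to the list of characters [a_{i_1}, ..., a_{i_k}] is a bijection from the set of antidominant backtraces for (i,j) onto the set of distinct LCSs of A_i and B_j (where LCSs are counted as character strings, not embeddings). -/

import Mathlib

/-- `s` is a common subsequence of `A` and `B`. -/
def IsCommonSubseq {α : Type*} (A B s : List α) : Prop :=
  s.Sublist A ∧ s.Sublist B

/-- `lcsL A B i j` is the maximum length of a common subsequence of the
length-`i` prefix of `A` and the length-`j` prefix of `B`. -/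
noncomputable def lcsL {α : Type*} (A B : List α) (i j : ℕ) : ℕ :=
  sSup {k | ∃ s : List α, IsCommonSubseq (A.take i) (B.take j) s ∧ s.length = k}

/-- `s` is a longest common subsequence of the length-`i` prefix of `A` and
the length-`j` prefix of `B`. -/
def IsLCS {α : Type*} (A B : List α) (i j : ℕ) (s : List α) : Prop :=
  IsCommonSubseq (A.take i) (B.take j) s ∧ s.length = lcsL A B i j

/-- The (1-indexed) pair `(i, j)` is a match: `a_i = b_j`. -/
def IsMatch {α : Type*} (A B : List α) (i j : ℕ) : Prop :=
  1 ≤ i ∧ i ≤ A.length ∧ 1 ≤ j ∧ j ≤ B.length ∧ A[i - 1]? = B[j - 1]?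

/-- `e` is an embedding of the list `s` in the pair of prefixes `(A_i, B_j)`:
a sequence of (1-indexed) position pairs, strictly increasing in both
coordinates, lying in `[1..i] × [1..j]`, such that the `t`-th pair points at
occurrences of the `t`-th character of `s` in both strings. -/
def IsEmbedding {α : Type*} (A B : List α) (i j : ℕ) (s : List α)
    (e : List (ℕ × ℕ)) : Prop :=
  e.Chain' (fun u v => u.1 < v.1 ∧ u.2 < v.2) ∧
  (∀ u ∈ e, 1 ≤ u.1 ∧ u.1 ≤ i ∧ 1 ≤ u.2 ∧ u.2 ≤ j) ∧
  List.Forall₂ (fun (u : ℕ × ℕ) (c : α) =>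
    A[u.1 - 1]? = some c ∧ B[u.2 - 1]? = some c) e s

/-- The match `(i, j)` is antidominant of rank `r` within the rectangle
`[1..I] × [1..J]`. -/
def IsAntidominant {α : Type*} (A B : List α) (r I J i j : ℕ) : Prop :=
  IsMatch A B i j ∧ i ≤ I ∧ j ≤ J ∧ lcsL A B i j = r ∧
  ¬ ∃ i' j', IsMatch A B i' j' ∧ lcsL A B i' j' = r ∧
    ((i' = i ∧ j < j' ∧ j' ≤ J) ∨ (j' = j ∧ i < i' ∧ i' ≤ I))

/-- `e` is an antidominant backtrace for `(i, j)`: a sequence of matches of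
length `L(i,j)`, strictly increasing in both coordinates, such that (setting
the `(k+1)`-st entry to `(i+1, j+1)`) the `t`-th match is antidominant of rank
`t` within the rectangle determined by the `(t+1)`-st entry minus one. -/
def IsAntidominantBacktrace {α : Type*} (A B : List α) (i j : ℕ)
    (e : List (ℕ × ℕ)) : Prop :=
  e.length = lcsL A B i j ∧
  e.Chain' (fun u v => u.1 < v.1 ∧ u.2 < v.2) ∧
  ∀ t < e.length,
    IsAntidominant A B (t + 1)
      (((e ++ [(i + 1, j + 1)]).getD (t + 1) (0, 0)).1 - 1)
      (((e ++ [(i + 1, j + 1)]).getD (t + 1) (0, 0)).2 - 1)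
      (e.getD t (0, 0)).1 (e.getD t (0, 0)).2


open List

section helpers

variable {α : Type*} (A B : List α)

lemma lcs_bdd (i j : ℕ) :
    BddAbove {k | ∃ s : List α, IsCommonSubseq (A.take i) (B.take j) s ∧ s.length = k} := by
  refine ⟨(A.take i).length, fun k hk => ?_⟩
  obtain ⟨s, ⟨h1, _⟩, rfl⟩ := hk
  exact h1.length_le

lemma lcsL_exists (i j : ℕ) :
    ∃ s : List α, IsCommonSubseq (A.take i) (B.take j) s ∧ s.length = lcsL A B i j := by
  have hne : {k | ∃ s : List α, IsCommonSubseq (A.take i) (B.take j) s ∧ s.length = k}.Nonempty :=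
    ⟨0, [], ⟨List.nil_sublist _, List.nil_sublist _⟩, rfl⟩
  exact Nat.sSup_mem hne (lcs_bdd A B i j)

lemma length_le_lcsL {i j : ℕ} {s : List α}
    (h : IsCommonSubseq (A.take i) (B.take j) s) : s.length ≤ lcsL A B i j :=
  le_csSup (lcs_bdd A B i j) ⟨s, h, rfl⟩

lemma take_sublist_take {i i' : ℕ} (h : i ≤ i') : (A.take i).Sublist (A.take i') := by
  have : A.take i = (A.take i').take i := by rw [List.take_take, min_eq_left h]
  rw [this]; exact (List.take_prefix _ _).sublist

lemma lcsL_mono {i j i' j' : ℕ} (hi : i ≤ i') (hj : j ≤ j') :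
    lcsL A B i j ≤ lcsL A B i' j' := by
  obtain ⟨s, ⟨h1, h2⟩, hl⟩ := lcsL_exists A B i j
  rw [← hl]
  exact length_le_lcsL A B ⟨h1.trans (take_sublist_take A hi), h2.trans (take_sublist_take B hj)⟩

lemma dropLast_sublist_concat {l L : List α} {x : α} (h : l <+ L ++ [x]) :
    l.dropLast <+ L := by
  rw [List.sublist_append_iff] at h
  obtain ⟨l₁, l₂, rfl, h1, h2⟩ := h
  rcases List.sublist_singleton.mp h2 with rfl | rfl
  · simpa using l₁.dropLast_sublist.trans h1
  · rw [List.dropLast_concat]; exact h1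

lemma lcsL_succ_right_le (i j : ℕ) : lcsL A B i (j + 1) ≤ lcsL A B i j + 1 := by
  obtain ⟨s, ⟨h1, h2⟩, hl⟩ := lcsL_exists A B i (j + 1)
  rw [← hl]
  have hd : s.dropLast <+ B.take j := by
    rw [List.take_succ] at h2
    rcases hx : B[j]? with _ | c
    · rw [hx] at h2; simpa using s.dropLast_sublist.trans h2
    · rw [hx] at h2; exact dropLast_sublist_concat h2
  have := length_le_lcsL A B ⟨s.dropLast_sublist.trans h1, hd⟩
  rw [List.length_dropLast] at this
  omega

lemma lcsL_succ_left_le (i j : ℕ) : lcsL A B (i + 1) j ≤ lcsL A B i j + 1 := by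
  obtain ⟨s, ⟨h1, h2⟩, hl⟩ := lcsL_exists A B (i + 1) j
  rw [← hl]
  have hd : s.dropLast <+ A.take i := by
    rw [List.take_succ] at h1
    rcases hx : A[i]? with _ | c
    · rw [hx] at h1; simpa using s.dropLast_sublist.trans h1
    · rw [hx] at h1; exact dropLast_sublist_concat h1
  have := length_le_lcsL A B ⟨hd, s.dropLast_sublist.trans h2⟩
  rw [List.length_dropLast] at this
  omega

end helpers

section match_lemma
variable {α : Type*} (A B : List α)

lemma take_eq_concat {p : ℕ} (hp : 1 ≤ p) (hpl : p ≤ A.length) :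
    A.take p = A.take (p - 1) ++ [A[p - 1]'(by omega)] := by
  have : p = (p - 1) + 1 := by omega
  conv_lhs => rw [this]
  rw [List.take_succ, List.getElem?_eq_getElem (by omega)]
  simp

lemma IsMatch.getA {p q : ℕ} (h : IsMatch A B p q) :
    A[p - 1]? = some (A[p - 1]'(by obtain ⟨h1, h2, _⟩ := h; omega)) :=
  List.getElem?_eq_getElem _

lemma lcsL_match {p q : ℕ} (h : IsMatch A B p q) :
    lcsL A B p q = lcsL A B (p - 1) (q - 1) + 1 := by
  obtain ⟨hp1, hpA, hq1, hqB, heq⟩ := h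
  set c := A[p - 1]'(by omega) with hc
  have hA? : A[p - 1]? = some c := List.getElem?_eq_getElem _
  have hB? : B[q - 1]? = some c := by rw [← heq, hA?]
  have hBc : B[q - 1]'(by omega) = c := by
    have := List.getElem?_eq_getElem (l := B) (i := q - 1) (by omega)
    rw [hB?] at this; exact (Option.some_injective _ this.symm)
  have hAtake : A.take p = A.take (p - 1) ++ [c] := take_eq_concat A hp1 hpA
  have hBtake : B.take q = B.take (q - 1) ++ [c] := by
    rw [take_eq_concat B hq1 hqB, hBc]
  have hge : lcsL A B (p - 1) (q - 1) + 1 ≤ lcsL A B p q := by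
    obtain ⟨s, ⟨h1, h2⟩, hl⟩ := lcsL_exists A B (p - 1) (q - 1)
    have : IsCommonSubseq (A.take p) (B.take q) (s ++ [c]) := by
      rw [hAtake, hBtake]
      exact ⟨h1.append (List.Sublist.refl _), h2.append (List.Sublist.refl _)⟩
    have := length_le_lcsL A B this
    simpa [hl] using this
  have hle : lcsL A B p q ≤ lcsL A B (p - 1) (q - 1) + 1 := by
    obtain ⟨s, ⟨h1, h2⟩, hl⟩ := lcsL_exists A B p q
    rw [hAtake] at h1; rw [hBtake] at h2
    have := length_le_lcsL A B ⟨dropLast_sublist_concat h1, dropLast_sublist_concat h2⟩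
    rw [List.length_dropLast, hl] at this
    omega
  omega

end match_lemma
section indices
variable {α : Type*} (A : List α)

lemma getElem?_take' {l : List α} {n m : ℕ} (h : m < n) : (List.take n l)[m]? = l[m]? := by
  rw [List.getElem?_take, if_pos h]

/-- positions strictly between `lo` and `i` picking out `s` give a sublist of `(A.take i).drop lo`. -/
lemma sublist_drop_of_indices : ∀ {e : List ℕ} {s : List α} {lo : ℕ} {i : ℕ},
    List.Forall₂ (fun p c => A[p - 1]? = some c) e s → e.Pairwise (· < ·) →
    (∀ p ∈ e, lo < p ∧ p ≤ i) → s <+ (A.take i).drop lo := by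
  intro e s lo i hf
  induction hf generalizing lo with
  | nil => intro _ _; exact List.nil_sublist _
  | @cons p c e' s' hp _ ih =>
    intro hpw hbd
    obtain ⟨hlop, hpi⟩ := hbd p (by simp)
    have hpA : p - 1 < A.length := by
      by_contra hcon
      rw [List.getElem?_eq_none (by omega)] at hp
      cases hp
    have hp1 : 1 ≤ p := by omega
    have hlt : p - 1 < (A.take i).length := by
      rw [List.length_take]; omega
    have hTp : (A.take i)[p - 1]? = A[p - 1]? := getElem?_take' (by omega)
    have hTval : (A.take i)[p - 1]'hlt = c := by
      have := List.getElem?_eq_getElem (l := A.take i) (i := p - 1) hlt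
      rw [hTp, hp] at this
      exact (Option.some_injective _ this.symm)
    have hdrop : (A.take i).drop (p - 1) = c :: (A.take i).drop p := by
      rw [List.drop_eq_getElem_cons hlt, hTval, show p - 1 + 1 = p by omega]
    have htail : s' <+ (A.take i).drop p := by
      refine ih (List.Pairwise.sublist (List.sublist_cons_self _ _) hpw) ?_
      intro q hq
      exact ⟨(List.pairwise_cons.mp hpw).1 q hq, (hbd q (List.mem_cons_of_mem _ hq)).2⟩
    have hcs : c :: s' <+ (A.take i).drop (p - 1) := by
      rw [hdrop]; exact htail.cons₂ c
    refine hcs.trans ?_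
    have heq : (A.take i).drop (p - 1) = ((A.take i).drop lo).drop (p - 1 - lo) := by
      rw [List.drop_drop]; congr 1; omega
    rw [heq]
    exact List.drop_sublist _ _

lemma sublist_of_indices {e : List ℕ} {s : List α} {i : ℕ}
    (hf : List.Forall₂ (fun p c => A[p - 1]? = some c) e s)
    (hpw : e.Pairwise (· < ·)) (hbd : ∀ p ∈ e, 1 ≤ p ∧ p ≤ i) :
    s <+ A.take i := by
  have := sublist_drop_of_indices A hf hpw (lo := 0) (i := i)
    (fun p hp => ⟨(hbd p hp).1, (hbd p hp).2⟩)
  simpa using this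

lemma exists_match_index {s : List α} {c : α} {I : ℕ}
    (h : s ++ [c] <+ A.take I) (hI : I ≤ A.length) :
    ∃ p, 1 ≤ p ∧ p ≤ I ∧ A[p - 1]? = some c ∧ s <+ A.take (p - 1) := by
  rw [List.append_sublist_iff] at h
  obtain ⟨r₁, r₂, hL, h1, h2⟩ := h
  have hc : c ∈ r₂ := (List.singleton_sublist).mp h2
  obtain ⟨u, v, rfl⟩ := List.append_of_mem hc
  have hlenI : (A.take I).length = I := by
    rw [List.length_take]; omega
  have hItot : I = r₁.length + u.length + 1 + v.length := by
    rw [← hlenI, hL]; simp; omega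
  set p := r₁.length + u.length + 1 with hp
  have hnI : r₁.length + u.length < I := by omega
  have hgt : (A.take I)[r₁.length + u.length]? = some c := by
    rw [hL, List.getElem?_append_right (by omega),
      show r₁.length + u.length - r₁.length = u.length by omega,
      List.getElem?_append_right (le_refl _)]
    simp
  have hA? : A[p - 1]? = some c := by
    have : A[r₁.length + u.length]? = (A.take I)[r₁.length + u.length]? :=
      (getElem?_take' hnI).symm
    rw [show p - 1 = r₁.length + u.length by omega, this, hgt]
  refine ⟨p, by omega, by omega, hA?, ?_⟩
  have htk : (A.take I).take (r₁.length + u.length) = r₁ ++ u := by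
    rw [hL, List.take_append,
      List.take_of_length_le (by omega),
      show r₁.length + u.length - r₁.length = u.length by omega,
      List.take_append,
      List.take_of_length_le (le_refl _)]
    simp
  have hsub : s <+ (A.take I).take (r₁.length + u.length) := by
    rw [htk]; exact h1.trans (List.sublist_append_left _ _)
  rw [List.take_take, min_eq_left (by omega)] at hsub
  rwa [show p - 1 = r₁.length + u.length by omega]

end indices
section getDhelp
variable {β : Type*}

lemma getD_append_left' {l l' : List β} {t : ℕ} (h : t < l.length) (d : β) :
    (l ++ l').getD t d = l.getD t d := by
  rw [List.getD_eq_getElem?_getD, List.getD_eq_getElem?_getD, List.getElem?_append_left h]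

lemma getD_last' {l : List β} (u d : β) : (l ++ [u]).getD l.length d = u := by
  rw [List.getD_eq_getElem?_getD, List.getElem?_append_right (le_refl _)]
  simp

lemma exists_of_forall_isSome {β γ : Type*} (f : β → Option γ) :
    ∀ (e : List β), (∀ u ∈ e, (f u).isSome) →
      ∃ s : List γ, e.map f = s.map some ∧ List.Forall₂ (fun u c => f u = some c) e s := by
  intro e
  induction e with
  | nil => exact fun _ => ⟨[], rfl, List.Forall₂.nil⟩
  | cons u e' ih =>
    intro h
    obtain ⟨c, hc⟩ := Option.isSome_iff_exists.mp (h u (by simp))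
    obtain ⟨s', hs1, hs2⟩ := ih (fun v hv => h v (List.mem_cons_of_mem _ hv))
    exact ⟨c :: s', by simp [hc, hs1], List.Forall₂.cons hc hs2⟩

end getDhelp

section part1
variable {α : Type*} {A B : List α}

lemma backtrace_to_lcs {i j : ℕ} (hi : i ≤ A.length) (hj : j ≤ B.length)
    {e : List (ℕ × ℕ)} (he : IsAntidominantBacktrace A B i j e) :
    ∃ s : List α, IsLCS A B i j s ∧ e.map (fun u => A[u.1 - 1]?) = s.map some := by
  obtain ⟨hlen, hch, hadm⟩ := he
  have hmatch : ∀ t (ht : t < e.length), IsMatch A B (e[t]).1 (e[t]).2 := by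
    intro t ht
    have := (hadm t ht).1
    rwa [List.getD_eq_getElem _ _ ht] at this
  haveI : IsTrans (ℕ × ℕ) (fun u v => u.1 < v.1 ∧ u.2 < v.2) :=
    ⟨fun a b c hab hbc => ⟨hab.1.trans hbc.1, hab.2.trans hbc.2⟩⟩
  have hpw : e.Pairwise (fun u v => u.1 < v.1 ∧ u.2 < v.2) := List.isChain_iff_pairwise.mp hch
  have hbd : ∀ t (ht : t < e.length), (e[t]).1 ≤ i ∧ (e[t]).2 ≤ j := by
    intro t ht
    have hlast : (e[e.length - 1]'(by omega)).1 ≤ i ∧ (e[e.length - 1]'(by omega)).2 ≤ j := by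
      have h := hadm (e.length - 1) (by omega)
      rw [show e.length - 1 + 1 = e.length by omega] at h
      have hg : (e ++ [(i + 1, j + 1)]).getD e.length (0, 0) = (i + 1, j + 1) := getD_last' _ _
      rw [hg] at h
      simp only at h
      rw [List.getD_eq_getElem _ _ (show e.length - 1 < e.length by omega)] at h
      exact ⟨by have := h.2.1; omega, by have := h.2.2.1; omega⟩
    rcases eq_or_lt_of_le (show t ≤ e.length - 1 by omega) with heq | hlt
    · subst heq; exact hlast
    · have := List.pairwise_iff_getElem.mp hpw t (e.length - 1) ht (by omega) hlt
      exact ⟨by have := this.1; omega, by have := this.2; omega⟩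
  have hsome : ∀ u ∈ e, (A[u.1 - 1]?).isSome := by
    intro u hu
    obtain ⟨t, ht, rfl⟩ := List.mem_iff_getElem.mp hu
    obtain ⟨h1, h2, _⟩ := hmatch t ht
    exact Option.isSome_iff_exists.mpr ⟨_, List.getElem?_eq_getElem (by omega)⟩
  obtain ⟨s, hmap, hf⟩ := exists_of_forall_isSome (fun u => A[u.1 - 1]?) e hsome
  have hlens : e.length = s.length := hf.length_eq
  have hgetf : ∀ t (ht : t < e.length), A[(e[t]).1 - 1]? = some (s[t]'(by omega)) := by
    intro t ht
    have := (List.forall₂_iff_get.mp hf).2 t ht (by omega)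
    simpa using this
  have hsubA : s <+ A.take i := by
    apply sublist_of_indices A (e := e.map Prod.fst)
    · rw [List.forall₂_iff_get]
      refine ⟨by simpa using hlens, ?_⟩
      intro t h1 h2
      simpa using hgetf t (by simpa using h1)
    · exact hpw.map _ (fun a b h => h.1)
    · intro p hp
      obtain ⟨u, hu, rfl⟩ := List.mem_map.mp hp
      obtain ⟨t, ht, rfl⟩ := List.mem_iff_getElem.mp hu
      exact ⟨(hmatch t ht).1, (hbd t ht).1⟩
  have hsubB : s <+ B.take j := by
    apply sublist_of_indices B (e := e.map Prod.snd)
    · rw [List.forall₂_iff_get]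
      refine ⟨by simpa using hlens, ?_⟩
      intro t h1 h2
      have ht : t < e.length := by simpa using h1
      have := (hmatch t ht).2.2.2.2
      simp only [List.get_eq_getElem, List.getElem_map]
      rw [← this]
      simpa using hgetf t ht
    · exact hpw.map _ (fun a b h => h.2)
    · intro p hp
      obtain ⟨u, hu, rfl⟩ := List.mem_map.mp hp
      obtain ⟨t, ht, rfl⟩ := List.mem_iff_getElem.mp hu
      exact ⟨(hmatch t ht).2.2.1, (hbd t ht).2⟩
  exact ⟨s, ⟨⟨hsubA, hsubB⟩, by omega⟩, hmap⟩

end part1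
section part2
variable {α : Type*} {A B : List α}

lemma backtrace_bounds {i j : ℕ} {e : List (ℕ × ℕ)}
    (he : IsAntidominantBacktrace A B i j e) :
    ∀ t (ht : t < e.length), (e[t]).1 ≤ i ∧ (e[t]).2 ≤ j := by
  obtain ⟨hlen, hch, hadm⟩ := he
  haveI : IsTrans (ℕ × ℕ) (fun u v => u.1 < v.1 ∧ u.2 < v.2) :=
    ⟨fun a b c hab hbc => ⟨hab.1.trans hbc.1, hab.2.trans hbc.2⟩⟩
  have hpw : e.Pairwise (fun u v => u.1 < v.1 ∧ u.2 < v.2) := List.isChain_iff_pairwise.mp hch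
  intro t ht
  have hlast : (e[e.length - 1]'(by omega)).1 ≤ i ∧ (e[e.length - 1]'(by omega)).2 ≤ j := by
    have h := hadm (e.length - 1) (by omega)
    rw [show e.length - 1 + 1 = e.length by omega] at h
    rw [getD_last'] at h
    simp only at h
    rw [List.getD_eq_getElem _ _ (show e.length - 1 < e.length by omega)] at h
    exact ⟨by have := h.2.1; omega, by have := h.2.2.1; omega⟩
  rcases eq_or_lt_of_le (show t ≤ e.length - 1 by omega) with heq | hlt
  · subst heq; exact hlast
  · have := List.pairwise_iff_getElem.mp hpw t (e.length - 1) ht (by omega) hlt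
    exact ⟨by have := this.1; omega, by have := this.2; omega⟩

lemma lcs_to_backtrace (s : List α) : ∀ (I J : ℕ), I ≤ A.length → J ≤ B.length →
    s <+ A.take I → s <+ B.take J → s.length = lcsL A B I J →
    ∃ e : List (ℕ × ℕ), IsAntidominantBacktrace A B I J e ∧
      e.map (fun u => A[u.1 - 1]?) = s.map some := by
  induction s using List.reverseRecOn with
  | nil =>
    intro I J _ _ _ _ hlen
    exact ⟨[], ⟨by simpa using hlen, List.isChain_nil, fun t ht => absurd ht (by simp)⟩, rfl⟩
  | append_singleton s' c ih =>
    intro I J hIA hJB hsA hsB hlen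
    set k := s'.length + 1 with hk
    have hkL : lcsL A B I J = k := by simpa using hlen.symm
    obtain ⟨p, hp1, hpI, hpc, hs'p⟩ := exists_match_index A hsA hIA
    obtain ⟨q, hq1, hqJ, hqc, hs'q⟩ := exists_match_index B hsB hJB
    have hmpq : IsMatch A B p q := ⟨hp1, by omega, hq1, by omega, by rw [hpc, hqc]⟩
    have hrankpq : lcsL A B p q = k := by
      have h1 : lcsL A B p q ≤ k := hkL ▸ lcsL_mono A B hpI hqJ
      have h2 : s'.length ≤ lcsL A B (p - 1) (q - 1) := length_le_lcsL A B ⟨hs'p, hs'q⟩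
      have h3 := lcsL_match A B hmpq
      omega
    -- the set of rows
    set S : Set ℕ := {p' | p' ≤ I ∧ ∃ q', q' ≤ J ∧ IsMatch A B p' q' ∧ lcsL A B p' q' = k ∧
      A[p' - 1]? = some c} with hS
    have hpS : p ∈ S := ⟨hpI, q, hqJ, hmpq, hrankpq, hpc⟩
    have hSbdd : BddAbove S := ⟨I, fun x hx => hx.1⟩
    set i₁ := sSup S with hi₁
    have hi₁S : i₁ ∈ S := Nat.sSup_mem ⟨p, hpS⟩ hSbdd
    obtain ⟨hi₁I, q₀, hq₀J, hmi₁q₀, hri₁q₀, hi₁c⟩ := hi₁S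
    have hpi₁ : p ≤ i₁ := le_csSup hSbdd hpS
    set T : Set ℕ := {q' | q' ≤ J ∧ IsMatch A B i₁ q' ∧ lcsL A B i₁ q' = k} with hT
    have hTbdd : BddAbove T := ⟨J, fun x hx => hx.1⟩
    have hq₀T : q₀ ∈ T := ⟨hq₀J, hmi₁q₀, hri₁q₀⟩
    set j₁ := sSup T with hj₁
    have hj₁T : j₁ ∈ T := Nat.sSup_mem ⟨q₀, hq₀T⟩ hTbdd
    obtain ⟨hj₁J, hmi₁j₁, hri₁j₁⟩ := hj₁T
    have hi₁1 : 1 ≤ i₁ := hmi₁j₁.1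
    have hj₁1 : 1 ≤ j₁ := hmi₁j₁.2.2.1
    have hj₁c : B[j₁ - 1]? = some c := by rw [← hmi₁j₁.2.2.2.2, hi₁c]
    -- q ≤ j₁
    have hqT : q ∈ T := by
      refine ⟨hqJ, ⟨hi₁1, hmi₁j₁.2.1, hq1, by omega, by rw [hi₁c, hqc]⟩, ?_⟩
      have h1 : lcsL A B i₁ q ≤ k := hkL ▸ lcsL_mono A B hi₁I hqJ
      have h2 : lcsL A B p q ≤ lcsL A B i₁ q := lcsL_mono A B hpi₁ (le_refl q)
      omega
    have hqj₁ : q ≤ j₁ := le_csSup hTbdd hqT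
    -- s' is an LCS of the smaller rectangle
    have hs'A : s' <+ A.take (i₁ - 1) := hs'p.trans (take_sublist_take A (by omega))
    have hs'B : s' <+ B.take (j₁ - 1) := hs'q.trans (take_sublist_take B (by omega))
    have hrect : lcsL A B (i₁ - 1) (j₁ - 1) = s'.length := by
      have := lcsL_match A B hmi₁j₁
      omega
    -- antidominance
    have hadm1 : IsAntidominant A B k I J i₁ j₁ := by
      refine ⟨hmi₁j₁, hi₁I, hj₁J, hri₁j₁, ?_⟩
      rintro ⟨i', j', hm', hr', (⟨rfl, hj₁j', hj'J⟩ | ⟨rfl, hi₁i', hi'I⟩)⟩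
      · have : j' ∈ T := ⟨hj'J, hm', hr'⟩
        have := le_csSup hTbdd this
        omega
      · have : i' ∈ S := ⟨hi'I, j₁, hj₁J, hm', hr', by rw [hm'.2.2.2.2, hj₁c]⟩
        have := le_csSup hSbdd this
        omega
    obtain ⟨e', he', hmap'⟩ := ih (i₁ - 1) (j₁ - 1) (by omega) (by omega) hs'A hs'B hrect.symm
    have hpair : ((i₁ - 1) + 1, (j₁ - 1) + 1) = (i₁, j₁) := by
      rw [show i₁ - 1 + 1 = i₁ by omega, show j₁ - 1 + 1 = j₁ by omega]
    have hbds := backtrace_bounds he'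
    obtain ⟨hlen', hch', hadm'⟩ := he'
    have hlene' : e'.length = s'.length := by omega
    refine ⟨e' ++ [(i₁, j₁)], ⟨?_, ?_, ?_⟩, ?_⟩
    · simp [hlene', hkL, hk]
    · refine List.isChain_append.mpr ?_
      refine ⟨hch', by simp, ?_⟩
      intro x hx y hy
      simp only [List.head?_cons, Option.mem_some_iff] at hy
      subst hy
      have hxm : x ∈ e' := List.mem_of_mem_getLast? hx
      obtain ⟨t, ht, rfl⟩ := List.mem_iff_getElem.mp hxm
      have := hbds t ht
      exact ⟨by omega, by omega⟩
    · intro t ht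
      simp only [List.length_append, List.length_cons, List.length_nil] at ht
      rcases lt_or_ge t e'.length with htl | htl
      · have h := hadm' t htl
        rw [hpair] at h
        have h1 : (e' ++ [(i₁, j₁)]).getD t (0, 0) = e'.getD t (0, 0) := getD_append_left' htl _
        have h2 : ((e' ++ [(i₁, j₁)]) ++ [(I + 1, J + 1)]).getD (t + 1) (0, 0)
            = (e' ++ [(i₁, j₁)]).getD (t + 1) (0, 0) := by
          apply getD_append_left'
          simp only [List.length_append, List.length_cons, List.length_nil]
          omega
        rw [h1, h2]
        exact h
      · have ht' : t = e'.length := by omega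
        subst ht'
        have h1 : (e' ++ [(i₁, j₁)]).getD e'.length (0, 0) = (i₁, j₁) := getD_last' _ _
        have h2 : ((e' ++ [(i₁, j₁)]) ++ [(I + 1, J + 1)]).getD (e'.length + 1) (0, 0)
            = (I + 1, J + 1) := by
          have : e'.length + 1 = (e' ++ [(i₁, j₁)]).length := by simp
          rw [this, getD_last']
        rw [h1, h2]
        simp only [add_tsub_cancel_right]
        rw [hlene']
        exact hadm1
    · simp only [List.map_append, hmap', List.map_cons, List.map_nil]
      rw [hi₁c]

end part2
section uniq
variable {α : Type*} {A B : List α}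

lemma antidominant_row_le {i j k p₁ q₁ p₂ q₂ : ℕ} (hi : i ≤ A.length) (hj : j ≤ B.length)
    (hL : lcsL A B i j = k + 1)
    (h₁ : IsAntidominant A B (k + 1) i j p₁ q₁) (h₂ : IsAntidominant A B (k + 1) i j p₂ q₂)
    (hc : A[p₁ - 1]? = A[p₂ - 1]?) : p₂ ≤ p₁ := by
  by_contra hcon
  push_neg at hcon
  obtain ⟨hm₁, hp₁i, hq₁j, hr₁, hnd₁⟩ := h₁
  obtain ⟨hm₂, hp₂i, hq₂j, hr₂, hnd₂⟩ := h₂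
  have hm' : IsMatch A B p₂ q₁ :=
    ⟨hm₂.1, hm₂.2.1, hm₁.2.2.1, hm₁.2.2.2.1, by rw [← hc, hm₁.2.2.2.2]⟩
  have hr' : lcsL A B p₂ q₁ = k + 1 := by
    have h1 : lcsL A B p₁ q₁ ≤ lcsL A B p₂ q₁ := lcsL_mono A B (le_of_lt hcon) (le_refl _)
    have h2 : lcsL A B p₂ q₁ ≤ lcsL A B i j := lcsL_mono A B hp₂i hq₁j
    omega
  exact hnd₁ ⟨p₂, q₁, hm', hr', Or.inr ⟨rfl, hcon, hp₂i⟩⟩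

lemma antidominant_top_unique {i j k p₁ q₁ p₂ q₂ : ℕ} (hi : i ≤ A.length) (hj : j ≤ B.length)
    (hL : lcsL A B i j = k + 1)
    (h₁ : IsAntidominant A B (k + 1) i j p₁ q₁) (h₂ : IsAntidominant A B (k + 1) i j p₂ q₂)
    (hc : A[p₁ - 1]? = A[p₂ - 1]?) : p₁ = p₂ ∧ q₁ = q₂ := by
  have hle1 := antidominant_row_le hi hj hL h₁ h₂ hc
  have hle2 := antidominant_row_le hi hj hL h₂ h₁ hc.symm
  have hp : p₁ = p₂ := le_antisymm hle2 hle1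
  subst hp
  refine ⟨rfl, ?_⟩
  by_contra hq
  rcases lt_or_gt_of_ne hq with hlt | hlt
  · exact h₁.2.2.2.2 ⟨p₁, q₂, h₂.1, h₂.2.2.2.1, Or.inl ⟨rfl, hlt, h₂.2.2.1⟩⟩
  · exact h₂.2.2.2.2 ⟨p₁, q₁, h₁.1, h₁.2.2.2.1, Or.inl ⟨rfl, hlt, h₁.2.2.1⟩⟩

lemma backtrace_unique : ∀ (k i j : ℕ), i ≤ A.length → j ≤ B.length → lcsL A B i j = k →
    ∀ e₁ e₂ : List (ℕ × ℕ), IsAntidominantBacktrace A B i j e₁ →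
    IsAntidominantBacktrace A B i j e₂ →
    e₁.map (fun u => A[u.1 - 1]?) = e₂.map (fun u => A[u.1 - 1]?) → e₁ = e₂ := by
  intro k
  induction k with
  | zero =>
    intro i j _ _ hL e₁ e₂ h₁ h₂ _
    have l₁ : e₁.length = 0 := by rw [h₁.1, hL]
    have l₂ : e₂.length = 0 := by rw [h₂.1, hL]
    rw [List.length_eq_zero_iff.mp l₁, List.length_eq_zero_iff.mp l₂]
  | succ k ih =>
    intro i j hi hj hL e₁ e₂ h₁ h₂ hmap
    have l₁ : e₁.length = k + 1 := by rw [h₁.1, hL]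
    have l₂ : e₂.length = k + 1 := by rw [h₂.1, hL]
    have hk₁ : k < e₁.length := by omega
    have hk₂ : k < e₂.length := by omega
    set u₁ := e₁[k] with hu₁
    set u₂ := e₂[k] with hu₂
    have he₁ : e₁.dropLast ++ [u₁] = e₁ := by
      have h := List.dropLast_append_getLast (l := e₁) (by intro h; rw [h] at l₁; simp at l₁)
      rw [List.getLast_eq_getElem] at h
      simp only [l₁, Nat.add_sub_cancel] at h
      exact h
    have he₂ : e₂.dropLast ++ [u₂] = e₂ := by
      have h := List.dropLast_append_getLast (l := e₂) (by intro h; rw [h] at l₂; simp at l₂)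
      rw [List.getLast_eq_getElem] at h
      simp only [l₂, Nat.add_sub_cancel] at h
      exact h
    -- top antidominance
    have had : ∀ (e : List (ℕ × ℕ)), IsAntidominantBacktrace A B i j e →
        ∀ (hke : k < e.length), e.length = k + 1 →
        IsAntidominant A B (k + 1) i j (e[k]).1 (e[k]).2 := by
      intro e he hke hlen
      have h := he.2.2 k hke
      rw [List.getD_eq_getElem _ _ hke] at h
      have hg : (e ++ [(i + 1, j + 1)]).getD (k + 1) (0, 0) = (i + 1, j + 1) := by
        rw [← hlen, getD_last']
      rw [hg] at h
      simpa using h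
    have had₁ : IsAntidominant A B (k + 1) i j u₁.1 u₁.2 := had e₁ h₁ hk₁ l₁
    have had₂ : IsAntidominant A B (k + 1) i j u₂.1 u₂.2 := had e₂ h₂ hk₂ l₂
    -- same character at the top
    have hc : A[u₁.1 - 1]? = A[u₂.1 - 1]? := by
      have := congrArg (fun l => l[k]?) hmap
      simpa [List.getElem?_map, List.getElem?_eq_getElem hk₁, List.getElem?_eq_getElem hk₂]
        using this
    obtain ⟨hp, hq⟩ := antidominant_top_unique hi hj hL had₁ had₂ hc
    have huu : u₁ = u₂ := Prod.ext hp hq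
    -- sub-backtraces
    have hm : IsMatch A B u₁.1 u₁.2 := had₁.1
    have hsubL : lcsL A B (u₁.1 - 1) (u₁.2 - 1) = k := by
      have h1 := lcsL_match A B hm
      have h2 := had₁.2.2.2.1
      omega
    have hsub : ∀ (e : List (ℕ × ℕ)), IsAntidominantBacktrace A B i j e →
        ∀ (hke : k < e.length) (hlen : e.length = k + 1), e.dropLast ++ [e[k]] = e →
        e[k] = u₁ →
        IsAntidominantBacktrace A B (u₁.1 - 1) (u₁.2 - 1) e.dropLast := by
      intro e he hke hlen hsplit hu
      obtain ⟨hel, hch, hadm⟩ := he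
      have hdl : e.dropLast.length = k := by rw [List.length_dropLast]; omega
      refine ⟨by rw [hdl, hsubL], ?_, ?_⟩
      · rw [← hsplit] at hch
        exact (List.isChain_append.mp hch).1
      · intro t ht
        rw [hdl] at ht
        have h := hadm t (by omega)
        have hu' : (u₁.1 - 1 + 1, u₁.2 - 1 + 1) = u₁ := by
          have h1 := hm.1
          have h2 := hm.2.2.1
          rw [Prod.ext_iff]
          exact ⟨by simp; omega, by simp; omega⟩
        have hg1 : e.getD t (0, 0) = e.dropLast.getD t (0, 0) := by
          conv_lhs => rw [← hsplit]
          exact getD_append_left' (by omega) _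
        have hg2 : (e ++ [(i + 1, j + 1)]).getD (t + 1) (0, 0)
            = (e.dropLast ++ [(u₁.1 - 1 + 1, u₁.2 - 1 + 1)]).getD (t + 1) (0, 0) := by
          rcases lt_or_eq_of_le (show t + 1 ≤ k by omega) with hlt | heqt
          · have L1 : (e ++ [(i + 1, j + 1)]).getD (t + 1) (0, 0)
                = e.dropLast.getD (t + 1) (0, 0) := by
              rw [getD_append_left' (by omega)]
              conv_lhs => rw [← hsplit]
              exact getD_append_left' (by omega) _
            rw [L1, getD_append_left' (by omega)]
          · have L1 : (e ++ [(i + 1, j + 1)]).getD (t + 1) (0, 0) = u₁ := by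
              rw [getD_append_left' (by omega), heqt, List.getD_eq_getElem _ _ hke]
              exact hu
            have L2 : (e.dropLast ++ [(u₁.1 - 1 + 1, u₁.2 - 1 + 1)]).getD (t + 1) (0, 0)
                = u₁ := by
              rw [heqt, ← hdl, getD_last', hu']
            rw [L1, L2]
        rw [hg1, hg2] at h
        exact h
    have hb₁ := hsub e₁ h₁ hk₁ l₁ he₁ rfl
    have hb₂ := hsub e₂ h₂ hk₂ l₂ he₂ huu.symm
    have hmapd : e₁.dropLast.map (fun u => A[u.1 - 1]?)
        = e₂.dropLast.map (fun u => A[u.1 - 1]?) := by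
      rw [← he₁, ← he₂] at hmap
      simp only [List.map_append] at hmap
      have := List.append_inj hmap (by simp [List.length_dropLast]; omega)
      exact this.1
    have := ih (u₁.1 - 1) (u₁.2 - 1) (by have := hm.2.1; omega) (by have := hm.2.2.2.1; omega)
      hsubL e₁.dropLast e₂.dropLast hb₁ hb₂ hmapd
    rw [← he₁, ← he₂, this, huu]

end uniq

theorem stmt_14 {α : Type*} [DecidableEq α] (A B : List α) (m n : ℕ)
    (hA : A.length = m) (hB : B.length = n) (i j : ℕ)
    (him : i ≤ m) (hjn : j ≤ n) :
    (∀ e : List (ℕ × ℕ), IsAntidominantBacktrace A B i j e →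
      ∃ s : List α, IsLCS A B i j s ∧
        e.map (fun u => A[u.1 - 1]?) = s.map some) ∧
    (∀ s : List α, IsLCS A B i j s →
      ∃! e : List (ℕ × ℕ), IsAntidominantBacktrace A B i j e ∧
        e.map (fun u => A[u.1 - 1]?) = s.map some) := by
  subst hA hB
  constructor
  · intro e he
    exact backtrace_to_lcs him hjn he
  · intro s hs
    obtain ⟨⟨hsA, hsB⟩, hlen⟩ := hs
    obtain ⟨e, he, hmap⟩ := lcs_to_backtrace s i j him hjn hsA hsB hlen
    refine ⟨e, ⟨he, hmap⟩, ?_⟩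
    rintro e' ⟨he', hmap'⟩
    exact backtrace_unique (lcsL A B i j) i j him hjn rfl e' e he' he (hmap'.trans hmap.symm)
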